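/- Let R be a Noetherian graded ring with graded maximal ideal m, and let X be a graded R-module which is R_+-torsion. If (0 :_X R_+) = Hom_R(R/R_+, X) is finitely generated and m-torsion, then (0 :_X R_+) is Artinian, and consequently X is Artinian if X is also m_0-torsion. -/

import Mathlib

open CategoryTheory CategoryTheory.Limits Opposite

/-- `ℕ` acts on `ℤ`-degrees by addition (used to grade modules over `ℕ`-graded rings). -/
instance : VAdd ℕ ℤ := ⟨fun n z => (n : ℤ) + z⟩

noncomputable section

/-- The directed system `M ⧸ a^t • M`, `t : ℕ`. -/
def genLCModDiagram {R : Type} [CommRing R] (a : Ideal R) (M : Type) [AddCommGroup M]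
    [Module R M] : ℕᵒᵖ ⥤ ModuleCat R where
  obj t := ModuleCat.of R (M ⧸ (a ^ (unop t) • ⊤ : Submodule R M))
  map {t t'} w := ModuleCat.ofHom (Submodule.mapQ (a ^ (unop t) • ⊤) (a ^ (unop t') • ⊤) LinearMap.id
    (Submodule.smul_mono (Ideal.pow_le_pow_right w.unop.down.down) le_rfl))
  map_id t := by
    apply ModuleCat.hom_ext
    simp only [ModuleCat.hom_ofHom, ModuleCat.hom_id]
    exact Submodule.mapQ_id _
  map_comp {t t' t''} f g := by
    apply ModuleCat.hom_ext
    simp only [ModuleCat.hom_comp, ModuleCat.hom_ofHom]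
    rw [← Submodule.mapQ_comp]
    rfl

/-- Generalized local cohomology `H^i_a(M, -)`, the direct limit of `Ext^i(M/a^t M, -)`. -/
def genLocalCohomology {R : Type} [CommRing R] (a : Ideal R) (M : Type) [AddCommGroup M]
    [Module R M] (i : ℕ) : ModuleCat R ⥤ ModuleCat R :=
  colimit ((genLCModDiagram a M).op ⋙ Ext R (ModuleCat R) i)



namespace Stmt15Aux

open Submodule

variable {R : Type} [CommRing R]

section Chain
variable {M : Type} [AddCommGroup M] [Module R M]

lemma chain_stabilizes {K : Submodule R M} (hK : IsArtinian R K)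
    (g : ℕ → Submodule R M) (hmono : ∀ i j, i ≤ j → g j ≤ g i) (hle : ∀ j, g j ≤ K) :
    ∃ J, ∀ j, J ≤ j → g j = g J := by
  haveI := hK
  let f : ℕ →o (Submodule R K)ᵒᵈ :=
    ⟨fun j => (g j).comap K.subtype, fun i j h => Submodule.comap_mono (hmono i j h)⟩
  obtain ⟨J, hJ⟩ := IsArtinian.monotone_stabilizes f
  refine ⟨J, fun j hj => ?_⟩
  have h1 : ∀ i, Submodule.map K.subtype ((g i).comap K.subtype) = g i := by
    intro i
    rw [Submodule.map_comap_subtype, inf_of_le_right (hle i)]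
  have := hJ j hj
  have h2 : (g J).comap K.subtype = (g j).comap K.subtype := this
  rw [← h1 j, ← h1 J, h2]

end Chain

section Principal

variable (x : R) {M : Type} [AddCommGroup M] [Module R M]

theorem melkersson_principal
    (htor : ∀ m : M, ∃ k : ℕ, x ^ k • m = 0)
    (hart : IsArtinian R (torsionBy R M x)) : IsArtinian R M := by
  set K : Submodule R M := torsionBy R M x with hK
  set A : ℕ → Submodule R M := fun k => torsionBy R M (x ^ k) with hA
  have hAmono : ∀ {k l : ℕ}, k ≤ l → A k ≤ A l := by
    intro k l h m hm
    rw [hA, mem_torsionBy_iff] at hm ⊢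
    obtain ⟨d, rfl⟩ := Nat.exists_eq_add_of_le h
    rw [add_comm, pow_add, mul_smul, hm, smul_zero]
  -- each A k is Artinian
  have hAart : ∀ k : ℕ, IsArtinian R (A k) := by
    intro k
    induction k with
    | zero =>
      have : A 0 = ⊥ := by
        apply le_antisymm _ bot_le
        intro m hm
        rw [hA, mem_torsionBy_iff, pow_zero, one_smul] at hm
        simpa using hm
      rw [this]
      infer_instance
    | succ k ih =>
      haveI := ih
      haveI := hart
      let f : A k →ₗ[R] A (k + 1) := Submodule.inclusion (hAmono (Nat.le_succ k))
      let g : A (k + 1) →ₗ[R] K :=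
        { toFun := fun m => ⟨x ^ k • (m : M), by
            rw [hK, mem_torsionBy_iff, smul_smul, ← pow_succ']
            exact (mem_torsionBy_iff _ _).1 m.2⟩
          map_add' := fun a b => Subtype.ext
            (show x ^ k • ((a : M) + (b : M)) = x ^ k • (a : M) + x ^ k • (b : M) from
              smul_add _ _ _)
          map_smul' := fun c a => Subtype.ext
            (show x ^ k • (c • (a : M)) = c • (x ^ k • (a : M)) from smul_comm _ _ _) }
      refine isArtinian_of_range_eq_ker f g ?_
      ext m
      constructor
      · rintro ⟨a, rfl⟩
        have : x ^ k • (a : M) = 0 := (mem_torsionBy_iff _ _).1 a.2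
        simp only [LinearMap.mem_ker]
        ext
        simpa [g, f] using this
      · intro hm
        simp only [LinearMap.mem_ker] at hm
        have h0 : x ^ k • (m : M) = 0 := congrArg Subtype.val hm
        exact ⟨⟨(m : M), (mem_torsionBy_iff _ _).2 h0⟩, rfl⟩
  -- the socle approximations
  set s : ℕ → Submodule R M → Submodule R M :=
    fun k V => Submodule.map (LinearMap.lsmul R M (x ^ k)) (V ⊓ A (k + 1)) with hs
  have mem_s : ∀ {k V z}, z ∈ s k V ↔ ∃ y, (y ∈ V ∧ y ∈ A (k+1)) ∧ x ^ k • y = z := by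
    intro k V z
    simp [hs, Submodule.mem_map, Submodule.mem_inf, LinearMap.lsmul_apply]
  have s_le_K : ∀ k V, s k V ≤ K := by
    intro k V z hz
    obtain ⟨y, ⟨-, hy2⟩, rfl⟩ := mem_s.1 hz
    rw [hK, mem_torsionBy_iff, smul_smul, ← pow_succ']
    exact (mem_torsionBy_iff _ _).1 hy2
  have s_anti : ∀ k V, s (k + 1) V ≤ s k V := by
    intro k V z hz
    obtain ⟨y, ⟨hy1, hy2⟩, rfl⟩ := mem_s.1 hz
    refine mem_s.2 ⟨x • y, ⟨V.smul_mem x hy1, ?_⟩, ?_⟩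
    · rw [hA, mem_torsionBy_iff, smul_smul, ← pow_succ]
      exact (mem_torsionBy_iff _ _).1 hy2
    · rw [smul_smul, ← pow_succ]
  have s_anti_le : ∀ {k l : ℕ}, k ≤ l → ∀ V, s l V ≤ s k V := by
    intro k l h V
    induction h with
    | refl => exact le_rfl
    | step h ih => exact le_trans (s_anti _ _) ih
  have s_mono : ∀ k {V W}, V ≤ W → s k V ≤ s k W :=
    fun k _ _ h => Submodule.map_mono (inf_le_inf_right _ h)
  -- main argument
  rw [← monotone_stabilizes_iff_artinian]
  intro f
  set V : ℕ → Submodule R M := fun j => OrderDual.ofDual (f j) with hV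
  have hVanti : ∀ {i j : ℕ}, i ≤ j → V j ≤ V i := fun h => f.monotone h
  -- diagonal socle sequence stabilizes
  obtain ⟨J1, hJ1⟩ := chain_stabilizes hart (fun j => s j (V j))
    (fun i j h => le_trans (s_anti_le h _) (s_mono _ (hVanti h)))
    (fun j => s_le_K _ _)
  have sconst : ∀ k j, J1 ≤ k → J1 ≤ j → s k (V j) = s J1 (V J1) := by
    intro k j hk hj
    apply le_antisymm
    · exact le_trans (s_anti_le hk _) (s_mono _ (hVanti hj))
    · have h1 := hJ1 (max k j) (le_trans hk (le_max_left _ _))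
      calc s J1 (V J1) = s (max k j) (V (max k j)) := h1.symm
        _ ≤ s k (V (max k j)) := s_anti_le (le_max_left _ _) _
        _ ≤ s k (V j) := s_mono _ (hVanti (le_max_right _ _))
  -- chain at level J1 stabilizes
  obtain ⟨J2', hJ2'⟩ := chain_stabilizes (hAart J1) (fun j => V j ⊓ A J1)
    (fun i j h => inf_le_inf_right _ (hVanti h)) (fun j => inf_le_right)
  set J2 := max J1 J2' with hJ2def
  have hJ1J2 : J1 ≤ J2 := le_max_left _ _
  refine ⟨J2, fun j hj => ?_⟩
  have hVj : V j ≤ V J2 := hVanti hj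
  have base : V j ⊓ A J1 = V J2 ⊓ A J1 := by
    rw [hJ2' j (le_trans (le_max_right _ _) hj), hJ2' J2 (le_max_right _ _)]
  have lvl : ∀ d : ℕ, V j ⊓ A (J1 + d) = V J2 ⊓ A (J1 + d) := by
    intro d
    induction d with
    | zero => simpa using base
    | succ d ih =>
      apply le_antisymm (inf_le_inf_right _ hVj)
      rintro u ⟨hu1, hu2⟩
      have hmem : x ^ (J1 + d) • u ∈ s (J1 + d) (V J2) :=
        mem_s.2 ⟨u, ⟨hu1, hu2⟩, rfl⟩
      have : x ^ (J1 + d) • u ∈ s (J1 + d) (V j) := by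
        rw [sconst _ j (Nat.le_add_right _ _) (le_trans hJ1J2 hj)]
        rw [← sconst _ J2 (Nat.le_add_right _ _) hJ1J2]
        exact hmem
      obtain ⟨u', ⟨hu'1, hu'2⟩, hu'3⟩ := mem_s.1 this
      have hsub : u - u' ∈ V J2 ⊓ A (J1 + d) := by
        constructor
        · exact Submodule.sub_mem _ hu1 (hVj hu'1)
        · exact (mem_torsionBy_iff _ _).2 (by rw [smul_sub, hu'3, sub_self])
      rw [← ih] at hsub
      have : u - u' ∈ V j := hsub.1
      constructor
      · have := Submodule.add_mem _ this hu'1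
        simpa using this
      · exact hu2
  -- conclude V j = V J2
  have : V J2 ≤ V j := by
    intro u hu
    obtain ⟨k, hk⟩ := htor u
    have huA : u ∈ A (J1 + k) := hAmono (Nat.le_add_left _ _) ((mem_torsionBy_iff _ _).2 hk)
    have : u ∈ V j ⊓ A (J1 + k) := by rw [lvl k]; exact ⟨hu, huA⟩
    exact this.1
  have hVeq : V J2 = V j := le_antisymm this hVj
  exact hVeq

end Principal



section ListInduction

theorem melkersson_list : ∀ (l : List R) (M : Type) [AddCommGroup M] [Module R M],
    (∀ m : M, ∃ k : ℕ, ∀ r ∈ (Ideal.span {r : R | r ∈ l}) ^ k, r • m = 0) →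
    IsArtinian R (torsionBySet R M {r : R | r ∈ l}) → IsArtinian R M := by
  intro l
  induction l with
  | nil =>
    intro M _ _ htor hart
    have h : torsionBySet R M {r : R | r ∈ ([] : List R)} = ⊤ := by
      refine eq_top_iff.2 fun m _ => ?_
      rw [mem_torsionBySet_iff]
      rintro ⟨a, ha⟩
      simp only [Set.mem_setOf_eq, List.not_mem_nil] at ha
    rw [h] at hart
    exact isArtinian_of_linearEquiv Submodule.topEquiv
  | cons x l ih =>
    intro M _ _ htor hart
    set Y : Submodule R M := torsionBy R M x with hY
    have htor' : ∀ y : Y, ∃ k : ℕ, ∀ r ∈ (Ideal.span {r : R | r ∈ l}) ^ k, r • y = 0 := by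
      intro y
      obtain ⟨k, hk⟩ := htor (y : M)
      refine ⟨k, fun r hr => Subtype.ext ?_⟩
      have hsub : Ideal.span {r : R | r ∈ l} ≤ Ideal.span {r : R | r ∈ x :: l} :=
        Ideal.span_mono (fun a ha => List.mem_cons_of_mem x ha)
      exact hk r (Ideal.pow_right_mono hsub k hr)
    have hart' : IsArtinian R (torsionBySet R Y {r : R | r ∈ l}) := by
      haveI := hart
      let φ : torsionBySet R Y {r : R | r ∈ l} →ₗ[R]
          torsionBySet R M {r : R | r ∈ x :: l} :=
        { toFun := fun z => ⟨((z : Y) : M), by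
            rw [mem_torsionBySet_iff]
            rintro ⟨a, ha⟩
            rcases List.mem_cons.1 ha with h | h
            · subst h
              exact (mem_torsionBy_iff _ _).1 (z : Y).2
            · have := (mem_torsionBySet_iff _ _).1 z.2 ⟨a, h⟩
              exact congrArg Subtype.val this⟩
          map_add' := fun a b => rfl
          map_smul' := fun c a => rfl }
      have hinj : Function.Injective φ := by
        intro z z' h
        have h1 : ((z : Y) : M) = ((z' : Y) : M) :=
          congrArg (fun w : torsionBySet R M {r : R | r ∈ x :: l} => (w : M)) h
        exact Subtype.ext (Subtype.ext h1)
      exact isArtinian_of_injective φ hinj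
    haveI hYart : IsArtinian R Y := ih Y htor' hart'
    have htor_x : ∀ m : M, ∃ k : ℕ, x ^ k • m = 0 := by
      intro m
      obtain ⟨k, hk⟩ := htor m
      exact ⟨k, hk (x ^ k) (Ideal.pow_mem_pow (Ideal.subset_span (by simp)) k)⟩
    exact melkersson_principal x htor_x hYart

theorem melkersson (a : Ideal R) (M : Type) [AddCommGroup M] [Module R M]
    (hfg : a.FG)
    (htor : ∀ m : M, ∃ k : ℕ, ∀ r ∈ a ^ k, r • m = 0)
    (hart : IsArtinian R (torsionBySet R M (a : Set R))) : IsArtinian R M := by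
  obtain ⟨S, hS⟩ := hfg
  have hls : {r : R | r ∈ S.toList} = (S : Set R) := by ext r; simp
  have hspan : Ideal.span {r : R | r ∈ S.toList} = a := by rw [hls, hS]
  apply melkersson_list S.toList M
  · intro m
    obtain ⟨k, hk⟩ := htor m
    exact ⟨k, by rw [hspan]; exact hk⟩
  · have h1 : torsionBySet R M {r : R | r ∈ S.toList} = torsionBySet R M (a : Set R) := by
      rw [torsionBySet_eq_torsionBySet_span, hspan]
    rw [h1]
    exact hart

end ListInduction

section Transfer

theorem isArtinian_of_ringHom {S : Type} [CommRing S] {M : Type} [AddCommGroup M]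
    [Module R M] [Module S M] (f : R →+* S) (hf : Function.Surjective f)
    (hc : ∀ (r : R) (m : M), f r • m = r • m) (h : IsArtinian S M) : IsArtinian R M := by
  let F : Submodule R M → Submodule S M := fun N =>
    { carrier := N
      add_mem' := fun ha hb => N.add_mem ha hb
      zero_mem' := N.zero_mem
      smul_mem' := fun s m hm => by
        obtain ⟨r, rfl⟩ := hf s
        rw [hc]
        exact N.smul_mem r hm }
  haveI := h
  have hstrict : StrictMono F := by
    intro N N' h'
    refine lt_of_le_of_ne (fun z hz => h'.le hz) (fun e => h'.ne ?_)
    have hcar : (N : Set M) = (N' : Set M) :=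
      congrArg (fun P : Submodule S M => (P : Set M)) e
    exact SetLike.coe_injective hcar
  exact hstrict.wellFoundedLT

theorem isArtinian_of_fg_of_pow_maximal_kill [IsNoetherianRing R] (J : Ideal R)
    (hJ : J.IsMaximal) :
    ∀ (k : ℕ) (M : Type) [AddCommGroup M] [Module R M], Module.Finite R M →
      (∀ r ∈ J ^ k, ∀ m : M, r • m = 0) → IsArtinian R M := by
  intro k
  induction k with
  | zero =>
    intro M _ _ _ hkill
    haveI : Subsingleton M := ⟨fun a b => by
      have ha := hkill 1 (by rw [pow_zero, Ideal.one_eq_top]; trivial) a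
      have hb := hkill 1 (by rw [pow_zero, Ideal.one_eq_top]; trivial) b
      rw [one_smul] at ha hb
      rw [ha, hb]⟩
    haveI : Finite M := Finite.of_subsingleton
    infer_instance
  | succ k ih =>
    intro M _ _ hfin hkill
    haveI := hfin
    haveI : IsNoetherian R M := inferInstance
    set N : Submodule R M := J • ⊤ with hN
    haveI hNart : IsArtinian R N := by
      refine ih N (Module.Finite.iff_fg.2 (IsNoetherian.noetherian N)) ?_
      intro r hr y
      refine Subtype.ext ?_
      show r • (y : M) = 0
      refine Submodule.smul_induction_on y.2 ?_ ?_
      · intro c hc m _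
        rw [smul_smul]
        exact hkill (r * c) (by rw [pow_succ]; exact Ideal.mul_mem_mul hr hc) m
      · intro m1 m2 h1 h2
        rw [smul_add, h1, h2, add_zero]
    haveI hQfin : Module.Finite R (M ⧸ N) :=
      Module.Finite.of_surjective N.mkQ (Submodule.Quotient.mk_surjective N)
    have hQ : Module.IsTorsionBySet R (M ⧸ N) (J : Set R) := by
      intro z a
      obtain ⟨m, rfl⟩ := Submodule.Quotient.mk_surjective N z
      rw [← Submodule.Quotient.mk_smul, Submodule.Quotient.mk_eq_zero]
      exact Submodule.smul_mem_smul a.2 trivial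
    letI : Module (R ⧸ J) (M ⧸ N) := hQ.module
    haveI : IsScalarTower R (R ⧸ J) (M ⧸ N) := hQ.isScalarTower
    letI : Field (R ⧸ J) := Ideal.Quotient.field J
    haveI : Module.Finite (R ⧸ J) (M ⧸ N) :=
      Module.Finite.of_restrictScalars_finite R (R ⧸ J) (M ⧸ N)
    haveI hQa : IsArtinian (R ⧸ J) (M ⧸ N) := isArtinian_of_fg_of_artinian'
    haveI hQart : IsArtinian R (M ⧸ N) :=
      isArtinian_of_ringHom (Ideal.Quotient.mk J) Ideal.Quotient.mk_surjective
        (fun r m => hQ.mk_smul r m) hQa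
    exact isArtinian_of_range_eq_ker N.subtype N.mkQ
      (by rw [Submodule.ker_mkQ, Submodule.range_subtype])

end Transfer

end Stmt15Aux

/-- `H^i_a(M,N)` as an object of `ModuleCat R`. -/
abbrev GLC {R : Type} [CommRing R] (a : Ideal R) (M : Type) [AddCommGroup M] [Module R M]
    (i : ℕ) (N : Type) [AddCommGroup N] [Module R N] : ModuleCat R :=
  (genLocalCohomology a M i).obj (ModuleCat.of R N)

/-- The `a`-torsion functor `Γ_a` : the submodule of elements killed by some power of `a`. -/
def torsionGamma {R : Type} [CommRing R] (a : Ideal R) (X : Type) [AddCommGroup X]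
    [Module R X] : Submodule R X :=
  ⨆ n : ℕ, Submodule.torsionBySet R X ((a ^ n : Ideal R) : Set R)

/-- `M` has projective dimension at most `n`: all `Ext^i(M, -)` for `i > n` vanish. -/
def HasProjDimLE {R : Type} [CommRing R] (M : Type) [AddCommGroup M] [Module R M]
    (n : ℕ) : Prop :=
  ∀ i : ℕ, n < i → ∀ N : ModuleCat R,
    Subsingleton (((Ext R (ModuleCat R) i).obj (op (ModuleCat.of R M))).obj N)

/-- The irrelevant ideal `R_+` of an `ℕ`-graded ring. -/
def irrIdeal {R : Type} [CommRing R] (𝒜 : ℕ → AddSubgroup R) [GradedRing 𝒜] : Ideal R :=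
  (HomogeneousIdeal.irrelevant 𝒜).toIdeal

/-- The ideal `m₀R` of `R` generated by the maximal ideal of the base ring `R₀ = 𝒜 0`. -/
def mzR {R : Type} [CommRing R] (𝒜 : ℕ → AddSubgroup R) [GradedRing 𝒜]
    [IsLocalRing (𝒜 0)] : Ideal R :=
  Ideal.span (Subtype.val '' ((IsLocalRing.maximalIdeal (𝒜 0) : Ideal (𝒜 0)) : Set (𝒜 0)))

namespace Stmt15Aux

section Graded

variable {R : Type} [CommRing R] (𝒜 : ℕ → AddSubgroup R) [GradedRing 𝒜] [IsLocalRing (𝒜 0)]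

lemma proj_of_grade_zero {r : R} (hr : r ∈ 𝒜 0) : GradedRing.projZeroRingHom 𝒜 r = r := by
  show ((DirectSum.decompose 𝒜 r) 0 : R) = r
  rw [DirectSum.decompose_of_mem_same 𝒜 hr]

lemma sub_proj_mem_irr (r : R) : r - GradedRing.projZeroRingHom 𝒜 r ∈ irrIdeal 𝒜 := by
  have h : (irrIdeal 𝒜) = RingHom.ker (GradedRing.projZeroRingHom 𝒜) :=
    HomogeneousIdeal.toIdeal_irrelevant 𝒜
  have hmem : GradedRing.projZeroRingHom 𝒜 r ∈ 𝒜 0 :=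
    SetLike.coe_mem (((DirectSum.decompose 𝒜) r) 0)
  rw [h, RingHom.mem_ker, map_sub, proj_of_grade_zero 𝒜 hmem, sub_self]

lemma irr_proj_zero {r : R} (hr : r ∈ irrIdeal 𝒜) : GradedRing.projZeroRingHom 𝒜 r = 0 := by
  have h : (irrIdeal 𝒜) = RingHom.ker (GradedRing.projZeroRingHom 𝒜) :=
    HomogeneousIdeal.toIdeal_irrelevant 𝒜
  rw [h, RingHom.mem_ker] at hr
  exact hr

lemma proj_mzR_mem {a : R} (ha : a ∈ mzR 𝒜) :
    ∃ v : 𝒜 0, v ∈ IsLocalRing.maximalIdeal (𝒜 0) ∧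
      (v : R) = GradedRing.projZeroRingHom 𝒜 a := by
  refine Submodule.span_induction ?_ ?_ ?_ ?_ ha
  · rintro x ⟨v, hv, rfl⟩
    exact ⟨v, hv, (proj_of_grade_zero 𝒜 v.2).symm⟩
  · exact ⟨0, Submodule.zero_mem _, by simp⟩
  · rintro x y hx hy ⟨v, hv, hvx⟩ ⟨w, hw, hwy⟩
    exact ⟨v + w, Submodule.add_mem _ hv hw, by
      rw [map_add, ← hvx, ← hwy]; rfl⟩
  · rintro r x hx ⟨v, hv, hvx⟩
    refine ⟨⟨GradedRing.projZeroRingHom 𝒜 r, SetLike.coe_mem _⟩ * v,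
      Ideal.mul_mem_left _ _ hv, ?_⟩
    rw [smul_eq_mul, map_mul, ← hvx]
    rfl

lemma mzr_sup_irr_isMaximal : (mzR 𝒜 ⊔ irrIdeal 𝒜).IsMaximal := by
  rw [Ideal.isMaximal_iff]
  constructor
  · intro hone
    rw [Submodule.mem_sup] at hone
    obtain ⟨a, ha, b, hb, hab⟩ := hone
    obtain ⟨v, hv, hva⟩ := proj_mzR_mem 𝒜 ha
    have h1 : (v : R) = 1 := by
      rw [hva]
      have := congrArg (GradedRing.projZeroRingHom 𝒜) hab
      rwa [map_add, irr_proj_zero 𝒜 hb, add_zero, map_one] at this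
    have h2 : v = 1 := Subtype.ext (by rw [h1]; rfl)
    have h3 : IsLocalRing.maximalIdeal (𝒜 0) = ⊤ :=
      (Ideal.eq_top_iff_one _).2 (h2 ▸ hv)
    exact (IsLocalRing.maximalIdeal.isMaximal (𝒜 0)).ne_top h3
  · intro J' x hle hx hxJ
    set x0 : R := GradedRing.projZeroRingHom 𝒜 x with hx0
    have hx0mem : x0 ∈ 𝒜 0 := SetLike.coe_mem _
    by_cases hcase : (⟨x0, hx0mem⟩ : 𝒜 0) ∈ IsLocalRing.maximalIdeal (𝒜 0)
    · exfalso
      apply hx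
      have h1 : x0 ∈ mzR 𝒜 := Ideal.subset_span ⟨_, hcase, rfl⟩
      have h2 : x - x0 ∈ irrIdeal 𝒜 := sub_proj_mem_irr 𝒜 x
      have h3 : x = x0 + (x - x0) := by ring
      rw [h3]
      exact Submodule.add_mem _ (Submodule.mem_sup_left h1) (Submodule.mem_sup_right h2)
    · have hunit : IsUnit (⟨x0, hx0mem⟩ : 𝒜 0) :=
        IsLocalRing.notMem_maximalIdeal.1 hcase
      obtain ⟨u, hu⟩ := hunit
      set v : 𝒜 0 := ↑u⁻¹ with hvdef
      have hv : v * ⟨x0, hx0mem⟩ = 1 := by rw [hvdef, ← hu]; exact u.inv_mul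
      have hvR : (v : R) * x0 = 1 := by
        have := congrArg (Subtype.val) hv
        exact this
      have h4 : (v : R) * (x - x0) = (v : R) * x - 1 := by rw [mul_sub, hvR]
      have h2 : (v : R) * (x - x0) ∈ J' :=
        hle (Submodule.mem_sup_right (Ideal.mul_mem_left _ _ (sub_proj_mem_irr 𝒜 x)))
      have h3 : (v : R) * x ∈ J' := Ideal.mul_mem_left _ _ hxJ
      have h5 : (1 : R) = (v : R) * x - (v : R) * (x - x0) := by rw [h4]; ring
      rw [h5]
      exact Submodule.sub_mem _ h3 h2

end Graded

end Stmt15Aux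

/-- If a graded module `X` is `R_+`-torsion and `(0 :_X R_+)` is finitely generated and
`m`-torsion, then `(0 :_X R_+)` is Artinian; consequently `X` is Artinian if `X` is
moreover `m₀`-torsion. -/
theorem stmt15 {R : Type} [CommRing R] [IsNoetherianRing R]
    (𝒜 : ℕ → AddSubgroup R) [GradedRing 𝒜] [IsLocalRing (𝒜 0)]
    (hhom : Subring.closure ((𝒜 0 : Set R) ∪ (𝒜 1 : Set R)) = ⊤)
    (X : Type) [AddCommGroup X] [Module R X]
    (𝒳 : ℤ → AddSubgroup X) [SetLike.GradedSMul 𝒜 𝒳] [DirectSum.Decomposition 𝒳]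
    (hXtor : ∀ x : X, ∃ k : ℕ, ∀ r ∈ (irrIdeal 𝒜) ^ k, r • x = 0)
    (hfg : Module.Finite R (Submodule.torsionBySet R X ((irrIdeal 𝒜 : Ideal R) : Set R)))
    (hmtor : ∀ y : Submodule.torsionBySet R X ((irrIdeal 𝒜 : Ideal R) : Set R),
      ∃ k : ℕ, ∀ r ∈ (mzR 𝒜 ⊔ irrIdeal 𝒜) ^ k, r • y = 0) :
    IsArtinian R (Submodule.torsionBySet R X ((irrIdeal 𝒜 : Ideal R) : Set R)) ∧
      ((∀ x : X, ∃ k : ℕ, ∀ r ∈ (mzR 𝒜) ^ k, r • x = 0) → IsArtinian R X) := by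
  classical
  set m : Ideal R := mzR 𝒜 ⊔ irrIdeal 𝒜 with hm
  have hmax : m.IsMaximal := Stmt15Aux.mzr_sup_irr_isMaximal 𝒜
  have hkill : ∃ k : ℕ, ∀ r ∈ m ^ k, ∀ y :
      Submodule.torsionBySet R X ((irrIdeal 𝒜 : Ideal R) : Set R), r • y = 0 := by
    obtain ⟨S, hS⟩ := hfg.fg_top
    choose kf hkf using hmtor
    refine ⟨S.sup kf, fun r hr y => ?_⟩
    have hy : y ∈ (⊤ : Submodule R (Submodule.torsionBySet R X
        ((irrIdeal 𝒜 : Ideal R) : Set R))) := trivial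
    rw [← hS] at hy
    refine Submodule.span_induction ?_ ?_ ?_ ?_ hy
    · intro z hz
      exact hkf z r (Ideal.pow_le_pow_right (Finset.le_sup hz) hr)
    · exact smul_zero r
    · intro a b _ _ hpa hpb
      rw [smul_add, hpa, hpb, add_zero]
    · intro c a _ hpa
      rw [smul_comm, hpa, smul_zero]
  obtain ⟨k, hk⟩ := hkill
  have hart1 : IsArtinian R (Submodule.torsionBySet R X ((irrIdeal 𝒜 : Ideal R) : Set R)) :=
    Stmt15Aux.isArtinian_of_fg_of_pow_maximal_kill m hmax k _ hfg hk
  refine ⟨hart1, fun hm0 => ?_⟩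
  refine Stmt15Aux.melkersson m X (IsNoetherian.noetherian m) ?_ ?_
  · intro x
    obtain ⟨k1, hk1⟩ := hm0 x
    obtain ⟨k2, hk2⟩ := hXtor x
    refine ⟨k1 + k2, fun r hr => ?_⟩
    have hmem : r ∈ mzR 𝒜 ^ k1 ⊔ irrIdeal 𝒜 ^ k2 :=
      Ideal.sup_pow_add_le_pow_sup_pow hr
    rw [Submodule.mem_sup] at hmem
    obtain ⟨a, ha, b, hb, rfl⟩ := hmem
    rw [add_smul, hk1 a ha, hk2 b hb, add_zero]
  · have hle : Submodule.torsionBySet R X (m : Set R) ≤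
        Submodule.torsionBySet R X ((irrIdeal 𝒜 : Ideal R) : Set R) := by
      intro y hy
      rw [Submodule.mem_torsionBySet_iff] at hy ⊢
      rintro ⟨a, ha⟩
      exact hy ⟨a, (le_sup_right : irrIdeal 𝒜 ≤ m) ha⟩
    haveI := hart1
    exact isArtinian_of_injective (Submodule.inclusion hle) (Submodule.inclusion_injective hle)
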